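/- No-cloning theorem: there is no unitary operator U on H ⊗ H and fixed state |e⟩ such that U(|ψ⟩⊗|e⟩) = |ψ⟩⊗|ψ⟩ for all unit vectors |ψ⟩ in H, provided dim H ≥ 2. -/

import Mathlib

open scoped TensorProduct InnerProductSpace

/-- No-cloning theorem: there is no unitary (inner-product-preserving linear) map `U`
on `H ⊗ H` and fixed unit state `e` such that `U (ψ ⊗ e) = ψ ⊗ ψ` for all unit
vectors `ψ`, provided `dim H ≥ 2`.  The inner product on `H ⊗ H` is given by a
function `inn` satisfying `inn (a ⊗ b) (a' ⊗ b') = ⟪a,a'⟫⟪b,b'⟫`. -/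
theorem no_cloning
    {H : Type*} [NormedAddCommGroup H] [InnerProductSpace ℂ H] [FiniteDimensional ℂ H]
    (hdim : 2 ≤ Module.finrank ℂ H)
    (inn : TensorProduct ℂ H H → TensorProduct ℂ H H → ℂ)
    (hinn : ∀ (a b a' b' : H), inn (a ⊗ₜ[ℂ] b) (a' ⊗ₜ[ℂ] b') = ⟪a, a'⟫_ℂ * ⟪b, b'⟫_ℂ)
    (U : TensorProduct ℂ H H →ₗ[ℂ] TensorProduct ℂ H H)
    (hU : ∀ x y, inn (U x) (U y) = inn x y)
    (e : H) (he : ‖e‖ = 1) :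
    ¬ (∀ ψ : H, ‖ψ‖ = 1 → U (ψ ⊗ₜ[ℂ] e) = ψ ⊗ₜ[ℂ] ψ) := by
  intro hclone
  set B := stdOrthonormalBasis ℂ H with hB
  have h0 : (0 : ℕ) < Module.finrank ℂ H := by omega
  have h1 : (1 : ℕ) < Module.finrank ℂ H := by omega
  set a := B ⟨0, h0⟩ with ha
  set b := B ⟨1, h1⟩ with hb
  have hna : ‖a‖ = 1 := B.orthonormal.1 _
  have hnb : ‖b‖ = 1 := B.orthonormal.1 _
  have haa : ⟪a, a⟫_ℂ = 1 := by
    have := inner_self_eq_norm_sq_to_K (𝕜 := ℂ) a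
    rw [hna] at this; simpa using this
  have hee : ⟪e, e⟫_ℂ = 1 := by
    have := inner_self_eq_norm_sq_to_K (𝕜 := ℂ) e
    rw [he] at this; simpa using this
  have hab : ⟪a, b⟫_ℂ = 0 := by
    apply B.orthonormal.2; simp
  have hs2 : Real.sqrt 2 ≠ 0 := by positivity
  set c2 : ℂ := ((Real.sqrt 2 : ℝ) : ℂ)⁻¹ with hc2
  set φ : H := c2 • (a + b) with hφ
  have hnab : ‖a + b‖ = Real.sqrt 2 := by
    have h := norm_add_sq (𝕜 := ℂ) a b
    rw [hna, hnb, hab] at h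
    simp at h
    rw [show ‖a + b‖ = Real.sqrt (‖a + b‖ ^ 2) from (Real.sqrt_sq (norm_nonneg _)).symm, h]
    norm_num
  have hnφ : ‖φ‖ = 1 := by
    rw [hφ, norm_smul, hnab, hc2]
    simp [Complex.norm_real, abs_of_nonneg (Real.sqrt_nonneg 2),
      inv_mul_cancel₀ hs2]
  have hiφ : ⟪a, φ⟫_ℂ = c2 := by
    rw [hφ, inner_smul_right, inner_add_right, haa, hab]
    ring
  have key := hU (a ⊗ₜ[ℂ] e) (φ ⊗ₜ[ℂ] e)
  rw [hclone a hna, hclone φ hnφ, hinn, hinn, hiφ, hee] at key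
  -- key : c2 * c2 = c2 * 1
  have hc2ne : c2 ≠ 0 := by
    rw [hc2]
    simp
  have hone : c2 = 1 := mul_left_cancel₀ hc2ne (by simpa using key)
  rw [hc2, inv_eq_one] at hone
  have h2 : Real.sqrt 2 = 1 := by exact_mod_cast hone
  nlinarith [Real.sq_sqrt (by norm_num : (0:ℝ) ≤ 2), h2]
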